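/- Let I and J be admissible multi-indices such that at least one of I, J contains a negative entry. Then the product P^I · P^J in B lies in the F_2-linear span of the set of elements P^K, where K ranges over nonempty admissible multi-indices whose final entry is negative. -/

import Mathlib

/-! Statements about the algebra `B` of generalized Steenrod operations at `p = 2`. -/

open scoped BigOperators

/-- The generator `P^s` of the free algebra, for `s : ℤ`. -/
noncomputable def Pfree (s : ℤ) : FreeAlgebra (ZMod 2) ℤ := FreeAlgebra.ι (ZMod 2) s

/-- The mod 2 binomial coefficient `binom (s-i-1) (r-2i)`, which is zero unless
`0 ≤ r - 2i ≤ s - i - 1`. -/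
def ademCoef (r s i : ℤ) : ZMod 2 :=
  if 0 ≤ r - 2*i ∧ r - 2*i ≤ s - i - 1 then ((s - i - 1).toNat.choose (r - 2*i).toNat : ZMod 2)
  else 0

/-- The right hand side `Σ_{i ∈ ℤ} binom(s−i−1, r−2i) P^{r+s−i} P^i` of the Adem relation;
all terms with `i` outside `Finset.Icc (r - s + 1) (r / 2)` have vanishing coefficient. -/
noncomputable def ademRHS (r s : ℤ) : FreeAlgebra (ZMod 2) ℤ :=
  ∑ i ∈ Finset.Icc (r - s + 1) (r / 2), ademCoef r s i • (Pfree (r + s - i) * Pfree i)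

/-- The Adem relations: for `r < 2s`, `P^r P^s` is related to its admissible expansion. -/
inductive AdemRel : FreeAlgebra (ZMod 2) ℤ → FreeAlgebra (ZMod 2) ℤ → Prop
  | rel (r s : ℤ) (h : r < 2*s) : AdemRel (Pfree r * Pfree s) (ademRHS r s)

/-- The algebra `B` of generalized Steenrod operations at the prime 2: the quotient of the
free noncommutative `F₂`-algebra on symbols `P^s`, `s ∈ ℤ`, by the two sided ideal generated
by the Adem relations. -/
noncomputable abbrev B : Type := RingQuot AdemRel

/-- The class of a generator `P^s` in `B`. -/
noncomputable def P (s : ℤ) : B := RingQuot.mkAlgHom (ZMod 2) AdemRel (Pfree s)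

/-- The monomial `P^I = P^{i₁} ⋯ P^{iₙ}` in `B` associated to a multi-index `I`. -/
noncomputable def PI (I : List ℤ) : B := (I.map P).prod

/-- A multi-index `I = (i₁, …, iₙ)` is admissible if `iⱼ ≥ 2 i_{j+1}` for all `j`. -/
def Admissible (I : List ℤ) : Prop := I.Chain' (fun a b => 2*b ≤ a)

/-- The excess `e(I) = i₁ − i₂ − ⋯ − iₙ` of a (nonempty) multi-index. -/
def excess : List ℤ → ℤ
  | [] => 0
  | a :: l => a - l.sum

/-! ### Auxiliary lemmas -/

lemma PI_nil : PI [] = 1 := rfl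
lemma PI_cons (a : ℤ) (l : List ℤ) : PI (a :: l) = P a * PI l := by simp [PI]
lemma PI_append (l₁ l₂ : List ℤ) : PI (l₁ ++ l₂) = PI l₁ * PI l₂ := by simp [PI]

lemma P_mul_P (r s : ℤ) (h : r < 2*s) :
    P r * P s = ∑ i ∈ Finset.Icc (r - s + 1) (r / 2),
      ademCoef r s i • (P (r + s - i) * P i) := by
  have h1 : RingQuot.mkAlgHom (ZMod 2) AdemRel (Pfree r * Pfree s)
      = RingQuot.mkAlgHom (ZMod 2) AdemRel (ademRHS r s) :=
    RingQuot.mkAlgHom_rel _ (AdemRel.rel r s h)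
  simpa [P, ademRHS, map_sum, map_mul] using h1

lemma ademCoef_bounds {r s i : ℤ} (h : ademCoef r s i ≠ 0) :
    0 ≤ r - 2*i ∧ r - 2*i ≤ s - i - 1 := by
  by_contra hc
  rw [ademCoef, if_neg hc] at h
  exact h rfl

lemma getLast!_cons_cons (a b : ℤ) (l : List ℤ) :
    (a :: b :: l).getLast! = (b :: l).getLast! := by
  simp [List.getLast!_cons_eq_getLastD]

lemma getLast!_singleton (a : ℤ) : ([a] : List ℤ).getLast! = a := by
  simp [List.getLast!_cons_eq_getLastD]

lemma getLast!_cons_ne (a : ℤ) {K : List ℤ} (h : K ≠ []) :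
    (a :: K).getLast! = K.getLast! := by
  cases K with
  | nil => exact absurd rfl h
  | cons b l => exact getLast!_cons_cons a b l

lemma getLast!_append {A K : List ℤ} (h : K ≠ []) :
    (A ++ K).getLast! = K.getLast! := by
  induction A with
  | nil => rfl
  | cons a A ih =>
    rw [List.cons_append, getLast!_cons_ne a (by simp [h]), ih]

lemma getLast!_eq_getLast {K : List ℤ} (h : K ≠ []) :
    K.getLast! = K.getLast h := by
  exact List.getLast!_of_getLast? (List.getLast?_eq_getLast h)

lemma neg_last : ∀ (J : List ℤ), Admissible J → (∃ a ∈ J, a < 0) → J.getLast! < 0 := by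
  intro J
  induction J with
  | nil => rintro _ ⟨a, ha, -⟩; simp at ha
  | cons b J' ih =>
    rintro hadm ⟨a, ha, haneg⟩
    cases J' with
    | nil =>
      simp only [List.mem_singleton] at ha
      subst ha
      simpa [getLast!_singleton] using haneg
    | cons t T =>
      have hbt : 2*t ≤ b := (List.isChain_cons_cons.mp hadm).1
      have htail : Admissible (t :: T) := (List.isChain_cons_cons.mp hadm).2
      rw [getLast!_cons_cons]
      rcases List.mem_cons.mp ha with rfl | ha'
      · exact ih htail ⟨t, List.mem_cons_self, by omega⟩
      · exact ih htail ⟨a, ha', haneg⟩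

/-- The key straightening lemma, by nested strong induction on the length of `K = k :: T`
and on the measure `(2*k - r).toNat`. -/
lemma key_claim : ∀ n m : ℕ, ∀ r k : ℤ, ∀ T : List ℤ,
    Admissible (k :: T) → (k :: T).getLast! < 0 → T.length = n → (2*k - r).toNat ≤ m →
    P r * PI (k :: T) ∈ Submodule.span (ZMod 2)
      {x : B | ∃ k' : ℤ, ∃ K' : List ℤ, Admissible (k' :: K') ∧ (k' :: K').getLast! < 0 ∧
        (k' :: K').length = n + 2 ∧ k' ≤ max r (2*k - 1) ∧ x = PI (k' :: K')} := by
  intro n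
  induction n using Nat.strong_induction_on with
  | _ n ihn =>
  intro m
  induction m using Nat.strong_induction_on with
  | _ m ihm =>
  intro r k T hadm hlast hlen hmeas
  by_cases hrk : 2*k ≤ r
  · -- already admissible
    apply Submodule.subset_span
    refine ⟨r, k :: T, List.isChain_cons_cons.mpr ⟨hrk, hadm⟩, ?_, by simp [hlen], le_max_left _ _,
      (PI_cons r (k :: T)).symm⟩
    rwa [getLast!_cons_cons]
  · push_neg at hrk
    rw [PI_cons, ← mul_assoc, P_mul_P r k hrk, Finset.sum_mul]
    apply Submodule.sum_mem
    intro i _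
    rw [smul_mul_assoc]
    by_cases hc : ademCoef r k i = 0
    · rw [hc, zero_smul]; exact Submodule.zero_mem _
    apply Submodule.smul_mem
    obtain ⟨h1, h2⟩ := ademCoef_bounds hc
    have hik : i ≤ k - 1 := by omega
    have har : r + 1 ≤ r + k - i := by omega
    have ha2k : r + k - i ≤ 2*k - 1 := by omega
    cases T with
    | nil =>
      have hkneg : k < 0 := by simpa [getLast!_singleton] using hlast
      apply Submodule.subset_span
      refine ⟨r + k - i, [i], ?_, ?_, by simp at hlen ⊢; omega, by omega, ?_⟩
      · simp only [Admissible, List.Chain', List.isChain_cons_cons, List.isChain_singleton, and_true]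
        omega
      · rw [getLast!_cons_cons, getLast!_singleton]; omega
      · simp [PI_cons, PI_nil, mul_assoc]
    | cons t T' =>
      have h2t : 2*t ≤ k := (List.isChain_cons_cons.mp hadm).1
      have htail : Admissible (t :: T') := (List.isChain_cons_cons.mp hadm).2
      have hlast' : (t :: T').getLast! < 0 := by rwa [getLast!_cons_cons] at hlast
      have hn' : T'.length < n := by simp at hlen; omega
      have inner := ihn T'.length hn' ((2*t - i).toNat) i t T' htail hlast' rfl le_rfl
      rw [mul_assoc]
      have hmap : Submodule.map (LinearMap.mulLeft (ZMod 2) (P (r + k - i)))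
          (Submodule.span (ZMod 2)
            {x : B | ∃ k' : ℤ, ∃ K' : List ℤ, Admissible (k' :: K') ∧
              (k' :: K').getLast! < 0 ∧ (k' :: K').length = T'.length + 2 ∧
              k' ≤ max i (2*t - 1) ∧ x = PI (k' :: K')})
          ≤ Submodule.span (ZMod 2)
            {x : B | ∃ k' : ℤ, ∃ K' : List ℤ, Admissible (k' :: K') ∧
              (k' :: K').getLast! < 0 ∧ (k' :: K').length = n + 2 ∧
              k' ≤ max r (2*k - 1) ∧ x = PI (k' :: K')} := by
        rw [Submodule.map_span_le]
        rintro y ⟨k'', K'', hadm'', hlast'', hlen'', hbd'', rfl⟩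
        rw [LinearMap.mulLeft_apply]
        have hk''k : k'' ≤ k - 1 := by
          rcases le_max_iff.mp hbd'' with h | h <;> omega
        have hmeas0 : (2*k - r).toNat ≤ m := hmeas
        have hmeas' : (2*k'' - (r + k - i)).toNat < m := by omega
        have hlenK'' : K''.length = n := by
          simp only [List.length_cons] at hlen hlen''
          omega
        have happ := ihm _ hmeas' (r + k - i) k'' K'' hadm'' hlast'' hlenK'' le_rfl
        refine Submodule.span_mono ?_ happ
        rintro x ⟨k3, K3, a1, a2, a3, a4, rfl⟩
        refine ⟨k3, K3, a1, a2, a3, ?_, rfl⟩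
        have : k3 ≤ 2*k - 1 := by
          rcases le_max_iff.mp a4 with h | h <;> omega
        exact le_trans this (le_max_right _ _)
      have := hmap (Submodule.mem_map_of_mem inner)
      simpa using this

/-- The full linear span target set. -/
def SF : Set B := {x : B | ∃ K : List ℤ, K ≠ [] ∧ Admissible K ∧ K.getLast! < 0 ∧ x = PI K}

lemma claim_subset_SF (n : ℕ) (r k : ℤ) :
    {x : B | ∃ k' : ℤ, ∃ K' : List ℤ, Admissible (k' :: K') ∧ (k' :: K').getLast! < 0 ∧
      (k' :: K').length = n + 2 ∧ k' ≤ max r (2*k - 1) ∧ x = PI (k' :: K')} ⊆ SF := by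
  rintro x ⟨k', K', a1, a2, _, _, rfl⟩
  exact ⟨k' :: K', List.cons_ne_nil _ _, a1, a2, rfl⟩

lemma P_mul_mem {r : ℤ} {y : B} (hy : y ∈ SF) :
    P r * y ∈ Submodule.span (ZMod 2) SF := by
  obtain ⟨K, hne, hadm, hlast, rfl⟩ := hy
  cases K with
  | nil => exact absurd rfl hne
  | cons k T =>
    have := key_claim T.length ((2*k - r).toNat) r k T hadm hlast rfl le_rfl
    exact Submodule.span_mono (claim_subset_SF T.length r k) this

lemma mul_left_span {c : B} {x : B} (hx : x ∈ Submodule.span (ZMod 2) SF) :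
    c * x ∈ Submodule.span (ZMod 2) (LinearMap.mulLeft (ZMod 2) c '' SF) := by
  rw [Submodule.span_image]
  exact Submodule.mem_map_of_mem hx

lemma lemmaM : ∀ (L : List ℤ), L ≠ [] → L.getLast! < 0 →
    PI L ∈ Submodule.span (ZMod 2) SF := by
  intro L
  induction L with
  | nil => intro h; exact absurd rfl h
  | cons a L' ih =>
    intro _ hlast
    cases L' with
    | nil =>
      apply Submodule.subset_span
      exact ⟨[a], List.cons_ne_nil _ _, List.isChain_singleton a, hlast, rfl⟩
    | cons b T =>
      have hlast' : (b :: T).getLast! < 0 := by rwa [getLast!_cons_cons] at hlast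
      have hb := ih (List.cons_ne_nil _ _) hlast'
      rw [PI_cons]
      have hmap : Submodule.map (LinearMap.mulLeft (ZMod 2) (P a))
          (Submodule.span (ZMod 2) SF) ≤ Submodule.span (ZMod 2) SF := by
        rw [Submodule.map_span_le]
        intro y hy
        rw [LinearMap.mulLeft_apply]
        exact P_mul_mem hy
      have := hmap (Submodule.mem_map_of_mem hb)
      simpa using this

lemma lemmaN : ∀ (C A : List ℤ) (mn : ℤ), mn < 0 → (∀ c ∈ C, 0 ≤ c) →
    PI (A ++ mn :: C) ∈ Submodule.span (ZMod 2) SF := by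
  intro C
  induction C with
  | nil =>
    intro A mn hm _
    apply lemmaM
    · simp
    · rw [getLast!_append (List.cons_ne_nil _ _), getLast!_singleton]; exact hm
  | cons t C' ih =>
    intro A mn hm hC
    have ht : 0 ≤ t := hC t (List.mem_cons_self)
    have hmt : mn < 2*t := by omega
    rw [PI_append, PI_cons, PI_cons, ← mul_assoc (P mn), P_mul_P mn t hmt,
      Finset.sum_mul, Finset.mul_sum]
    apply Submodule.sum_mem
    intro i _
    rw [smul_mul_assoc, mul_smul_comm]
    by_cases hc : ademCoef mn t i = 0
    · rw [hc, zero_smul]; exact Submodule.zero_mem _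
    apply Submodule.smul_mem
    obtain ⟨h1, _⟩ := ademCoef_bounds hc
    have hineg : i < 0 := by omega
    have := ih (A ++ [mn + t - i]) i hineg (fun c hc' => hC c (List.mem_cons_of_mem _ hc'))
    rw [List.append_assoc, List.singleton_append] at this
    simpa only [PI_append, PI_cons, PI_nil, mul_one, mul_assoc] using this

/-- **Statement 14.** If `I` and `J` are admissible multi-indices at least one of which contains
a negative entry, then `P^I · P^J` lies in the `F₂`-linear span of the elements `P^K`, where
`K` ranges over nonempty admissible multi-indices whose final entry is negative. -/
theorem statement14 (I J : List ℤ) (hI : Admissible I) (hJ : Admissible J)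
    (hneg : (∃ a ∈ I, a < 0) ∨ ∃ a ∈ J, a < 0) :
    PI I * PI J ∈ Submodule.span (ZMod 2)
      {x : B | ∃ K : List ℤ, K ≠ [] ∧ Admissible K ∧ K.getLast! < 0 ∧ x = PI K} := by
  show PI I * PI J ∈ Submodule.span (ZMod 2) SF
  by_cases hJneg : ∃ a ∈ J, a < 0
  · have hJne : J ≠ [] := by obtain ⟨a, ha, -⟩ := hJneg; rintro rfl; simp at ha
    have hlastJ : J.getLast! < 0 := neg_last J hJ hJneg
    rw [← PI_append]
    apply lemmaM
    · simp [hJne]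
    · rw [getLast!_append hJne]; exact hlastJ
  · have hIneg := hneg.resolve_right hJneg
    push_neg at hJneg
    have hIne : I ≠ [] := by obtain ⟨a, ha, -⟩ := hIneg; rintro rfl; simp at ha
    have hlastI : I.getLast hIne < 0 := by
      have := neg_last I hI hIneg
      rwa [getLast!_eq_getLast hIne] at this
    have hsplit : I ++ J = I.dropLast ++ I.getLast hIne :: J := by
      rw [← List.singleton_append, ← List.append_assoc, List.dropLast_append_getLast]
    rw [← PI_append, hsplit]
    exact lemmaN J I.dropLast _ hlastI hJneg
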